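/- The matching produced by Step 1 of an EAM mechanism is maximal: if μ is obtained by iteratively restricting, according to a fixed enumeration (i_1,...,i_n) of students, the set of individually rational matchings to those assigning student i_k whenever such matchings exist, then any matching μ in the final nonempty set ξ^n is a maximal individually rational matching. -/
import Mathlib


open Finset
open scoped Classical

/-- A matching assigns each student a school or `none` (unassigned). -/
abbrev Matching (I S : Type*) := I → Option S

/-- An individual strict preference over `S ∪ {∅}`: an injective utility
function on `Option S` (higher value = more preferred, `none` = being
unassigned). -/
abbrev IndPref (S : Type*) := {f : Option S → ℕ // Function.Injective f}

/-- A preference profile: one strict preference per student. -/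
abbrev Prof (I S : Type*) := I → IndPref S

/-- Strict school priorities: for each school, an injective rank over
students (higher value = higher priority). -/
abbrev Prio (I S : Type*) := {p : S → I → ℕ // ∀ s, Function.Injective (p s)}

/-- A mechanism maps reported preference profiles to matchings. -/
abbrev Mechanism (I S : Type*) := Prof I S → Matching I S

variable {I S : Type*} [Fintype I] [DecidableEq I] [Fintype S] [DecidableEq S]

/-- Capacity feasibility. -/
def Feasible (q : S → ℕ) (μ : Matching I S) : Prop :=
  ∀ s : S, (univ.filter fun i => μ i = some s).card ≤ q s

/-- Individual rationality with respect to profile `P`. -/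
def IndivRational (P : Prof I S) (μ : Matching I S) : Prop :=
  ∀ i, (P i).1 none ≤ (P i).1 (μ i)

/-- Number of assigned students. -/
def msize (μ : Matching I S) : ℕ := (univ.filter fun i => μ i ≠ none).card

/-- Maximality: no feasible individually rational matching assigns strictly
more students. -/
def MaximalMatching (P : Prof I S) (q : S → ℕ) (μ : Matching I S) : Prop :=
  ∀ μ' : Matching I S, Feasible q μ' → IndivRational P μ' → msize μ' ≤ msize μ

/-- `μ'` Pareto dominates `μ`. -/
def Dominates (P : Prof I S) (μ' μ : Matching I S) : Prop :=
  (∀ i, (P i).1 (μ i) ≤ (P i).1 (μ' i)) ∧ ∃ j, (P j).1 (μ j) < (P j).1 (μ' j)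

/-- Pareto efficiency among feasible individually rational matchings. -/
def Efficient (P : Prof I S) (q : S → ℕ) (μ : Matching I S) : Prop :=
  ¬ ∃ μ', Feasible q μ' ∧ IndivRational P μ' ∧ Dominates P μ' μ

/-- Non-wastefulness. -/
def NonWasteful (P : Prof I S) (q : S → ℕ) (μ : Matching I S) : Prop :=
  ∀ i s, (P i).1 (μ i) < (P i).1 (some s) →
    (univ.filter fun j => μ j = some s).card = q s

/-- Fairness (no justified envy). -/
def Fair (P : Prof I S) (pr : Prio I S) (μ : Matching I S) : Prop :=
  ¬ ∃ i s j, (P i).1 (μ i) < (P i).1 (some s) ∧ μ j = some s ∧ pr.1 s j < pr.1 s i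

/-- Stability: individually rational, non-wasteful and fair. -/
def Stable (P : Prof I S) (pr : Prio I S) (q : S → ℕ) (μ : Matching I S) : Prop :=
  Feasible q μ ∧ IndivRational P μ ∧ NonWasteful P q μ ∧ Fair P pr μ

/-- Fairness for unassigned students. -/
def FairForUnassigned (P : Prof I S) (pr : Prio I S) (μ : Matching I S) : Prop :=
  ¬ ∃ i s j, μ i = none ∧ (P i).1 none < (P i).1 (some s) ∧ μ j = some s ∧
    pr.1 s j < pr.1 s i

/-- `(a, t)` is an improving chain for `μ`: each student `a k` strictly
prefers `t k` to their assignment, each school `t k` (for `k < n`) is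
currently occupied by the next student `a (k+1)`, and the last school has
excess capacity. -/
def IsImpChain (P : Prof I S) (q : S → ℕ) (μ : Matching I S)
    (n : ℕ) (a : Fin (n + 1) → I) (t : Fin (n + 1) → S) : Prop :=
  Function.Injective a ∧
  (∀ k, (P (a k)).1 (μ (a k)) < (P (a k)).1 (some (t k))) ∧
  (∀ k : Fin n, μ (a k.succ) = some (t k.castSucc)) ∧
  (univ.filter fun j => μ j = some (t (Fin.last n))).card < q (t (Fin.last n))

/-- `(a, t)` is an improving cycle for `μ`: each student `a k` is assigned
to `t k` and strictly prefers the school `t (k+1)` vacated by the next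
student in the cycle. -/
def IsImpCycle (P : Prof I S) (μ : Matching I S)
    (n : ℕ) (a : Fin (n + 1) → I) (t : Fin (n + 1) → S) : Prop :=
  Function.Injective a ∧
  (∀ k, μ (a k) = some (t k)) ∧
  (∀ k, (P (a k)).1 (some (t k)) < (P (a k)).1 (some (t (k + 1))))

def HasImpChain (P : Prof I S) (q : S → ℕ) (μ : Matching I S) : Prop :=
  ∃ n a t, IsImpChain P q μ n a t

def HasImpCycle (P : Prof I S) (μ : Matching I S) : Prop :=
  ∃ n a t, IsImpCycle P μ n a t

/-- Implementing one improving chain or cycle: every student involved moves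
to the school they prefer in the chain/cycle, all others keep their
assignment. -/
def ImplementStep (P : Prof I S) (q : S → ℕ) (μ μ' : Matching I S) : Prop :=
  (∃ n a t, IsImpChain P q μ n a t ∧ (∀ k, μ' (a k) = some (t k)) ∧
    ∀ j, (∀ k, j ≠ a k) → μ' j = μ j) ∨
  (∃ n a t, IsImpCycle P μ n a t ∧ (∀ k, μ' (a k) = some (t (k + 1))) ∧
    ∀ j, (∀ k, j ≠ a k) → μ' j = μ j)

/-- One refinement step of the first stage of EAM: keep only the matchings
assigning student `i`, whenever such matchings exist. -/
noncomputable def xiStep (A : Set (Matching I S)) (i : I) : Set (Matching I S) :=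
  if ∃ μ ∈ A, μ i ≠ none then {μ ∈ A | μ i ≠ none} else A

/-- The set `ξ^n` of the first stage of EAM, for the enumeration `L` of the
students, starting from all feasible individually rational matchings. -/
noncomputable def xiList (P : Prof I S) (q : S → ℕ) (L : List I) :
    Set (Matching I S) :=
  L.foldl xiStep {μ | Feasible q μ ∧ IndivRational P μ}

/-- `μ` is a possible outcome of an EAM procedure with student enumeration
`L`: it is reachable from some matching selected in the first stage by
implementing improving chains/cycles, and admits no further improving chain
or cycle. -/
def IsEAMOutcome (P : Prof I S) (q : S → ℕ) (L : List I) (μ : Matching I S) :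
    Prop :=
  ∃ μ₀ ∈ xiList P q L, Relation.ReflTransGen (ImplementStep P q) μ₀ μ ∧
    ¬ HasImpChain P q μ ∧ ¬ HasImpCycle P μ

/-- EAM mechanisms with enumeration `L`. -/
def IsEAMMech (q : S → ℕ) (L : List I) (ψ : Mechanism I S) : Prop :=
  ∀ P, IsEAMOutcome P q L (ψ P)

/-- One sub-step of Step 2 of FAM: a pair `(i, s)` violating fairness for
unassigned students is resolved by placing `i` at `s` and unassigning the
lowest-priority student currently matched to `s`. -/
def FairStep (P : Prof I S) (pr : Prio I S) (μ μ' : Matching I S) : Prop :=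
  ∃ i s j, μ i = none ∧ (P i).1 none < (P i).1 (some s) ∧ μ j = some s ∧
    pr.1 s j < pr.1 s i ∧ (∀ j', μ j' = some s → pr.1 s j ≤ pr.1 s j') ∧
    μ' = Function.update (Function.update μ j none) i (some s)

/-- FAM mechanisms: an EAM first stage followed by iterated resolution of
violations of fairness for unassigned students. -/
def IsFAMMech (q : S → ℕ) (pr : Prio I S) (L : List I) (ψ : Mechanism I S) :
    Prop :=
  ∀ P, ∃ μ₁, IsEAMOutcome P q L μ₁ ∧
    Relation.ReflTransGen (FairStep P pr) μ₁ (ψ P) ∧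
    FairForUnassigned P pr (ψ P)

/-- Individually rational mechanism (with respect to reports). -/
def IRMech (q : S → ℕ) (ψ : Mechanism I S) : Prop :=
  ∀ P, Feasible q (ψ P) ∧ IndivRational P (ψ P)

/-- MaximalMatching mechanism. -/
def MaximalMech (q : S → ℕ) (ψ : Mechanism I S) : Prop :=
  IRMech q ψ ∧ ∀ P, MaximalMatching P q (ψ P)

/-- Nash equilibrium of the preference-reporting game induced by `ψ`, with
true preferences `u`. -/
def NashEq (u : Prof I S) (ψ : Mechanism I S) (P' : Prof I S) : Prop :=
  ∀ (i : I) (Pi'' : IndPref S),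
    (u i).1 (ψ (Function.update P' i Pi'') i) ≤ (u i).1 (ψ P' i)

/-- Strategy-proofness. -/
def StrategyProof (ψ : Mechanism I S) : Prop :=
  ∀ (P : Prof I S) (i : I) (Pi' : IndPref S),
    (P i).1 (ψ (Function.update P i Pi') i) ≤ (P i).1 (ψ P i)

/-- A maximizer of `f` on the nonempty finite set `A`. -/
noncomputable def bestOf (f : Option S → ℕ) (A : Finset (Option S))
    (h : A.Nonempty) : Option S :=
  (Finset.exists_max_image A f h).choose

/-- Serial dictatorship: students pick, in the order given, their most
preferred option among `none` and the schools with remaining capacity. -/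
noncomputable def sdRun (P : Prof I S) :
    List I → (S → ℕ) → Matching I S → Matching I S
  | [], _, μ => μ
  | i :: rest, rem, μ =>
    let c := bestOf (P i).1 (insert none ((univ.filter fun s => 0 < rem s).image some))
      (insert_nonempty _ _)
    sdRun P rest (fun s => if c = some s then rem s - 1 else rem s)
      (Function.update μ i c)

/-- The serial dictatorship outcome with ordering `L` and capacities `q`. -/
noncomputable def SD (P : Prof I S) (q : S → ℕ) (L : List I) : Matching I S :=
  sdRun P L q fun _ => none


variable {I S : Type*} [Fintype I] [DecidableEq I] [Fintype S] [DecidableEq S]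

section AuxEAM

variable {I S : Type*} [Fintype I] [DecidableEq I] [Fintype S] [DecidableEq S]
variable (P : Prof I S) (q : S → ℕ)

/-- The finset of acceptable "slots" (school, seat index) for student `i`. -/
noncomputable def slotsOf (i : I) : Finset (S × ℕ) :=
  (univ.filter fun s => (P i).1 none ≤ (P i).1 (some s)).biUnion
    fun s => (Finset.range (q s)).image fun k => (s, k)

lemma mem_slotsOf {i : I} {p : S × ℕ} :
    p ∈ slotsOf P q i ↔ (P i).1 none ≤ (P i).1 (some p.1) ∧ p.2 < q p.1 := by
  obtain ⟨s, k⟩ := p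
  simp only [slotsOf, mem_biUnion, mem_filter, mem_univ, true_and, mem_image,
    Finset.mem_range, Prod.mk.injEq]
  constructor
  · rintro ⟨s', hs', k', hk', rfl, rfl⟩; exact ⟨hs', hk'⟩
  · rintro ⟨h1, h2⟩; exact ⟨s, h1, k, h2, rfl, rfl⟩

/-- Hall condition for a set of students. -/
def HallCond (X : Finset I) : Prop :=
  ∀ X' ⊆ X, X'.card ≤ (X'.biUnion (slotsOf P q)).card

/-- `X` is exactly the set of assigned students of some feasible IR matching. -/
def MatchableSet (X : Finset I) : Prop :=
  ∃ ν : Matching I S, Feasible q ν ∧ IndivRational P ν ∧ ∀ i, ν i ≠ none ↔ i ∈ X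

/-- A rank of student `i` within the students assigned to school `s` by `ν`. -/
noncomputable def rankAt (ν : Matching I S) (s : S) (i : I) : ℕ :=
  if h : ν i = some s then
    ((univ.filter fun j => ν j = some s).equivFin ⟨i, by simp [h]⟩ : Fin _).val
  else 0

lemma rankAt_lt {ν : Matching I S} {s : S} {i : I} (hF : Feasible q ν)
    (h : ν i = some s) : rankAt ν s i < q s := by
  rw [rankAt, dif_pos h]
  exact lt_of_lt_of_le (Fin.is_lt _) (hF s)

lemma rankAt_inj {ν : Matching I S} {s : S} {i j : I} (hi : ν i = some s)
    (hj : ν j = some s) (h : rankAt ν s i = rankAt ν s j) : i = j := by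
  rw [rankAt, dif_pos hi, rankAt, dif_pos hj] at h
  have := (univ.filter fun j => ν j = some s).equivFin.injective (Fin.ext h)
  exact congrArg Subtype.val this

lemma MatchableSet.hallCond {X : Finset I} (h : MatchableSet P q X) :
    HallCond P q X := by
  obtain ⟨ν, hF, hIR, hX⟩ := h
  intro X' hX'
  have hassigned : ∀ i ∈ X', ∃ s, ν i = some s := by
    intro i hi
    have := (hX i).2 (hX' hi)
    cases hn : ν i with
    | none => exact absurd hn this
    | some s => exact ⟨s, rfl⟩
  rcases isEmpty_or_nonempty S with hS | hS
  · have : X' = ∅ := by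
      rw [Finset.eq_empty_iff_forall_notMem]
      intro i hi
      obtain ⟨s, -⟩ := hassigned i hi
      exact hS.elim s
    simp [this]
  have sd : S := Classical.arbitrary S
  set g : I → S × ℕ := fun i => ((ν i).getD sd, rankAt ν ((ν i).getD sd) i) with hg
  apply Finset.card_le_card_of_injOn g
  · intro i hi
    obtain ⟨s, hs⟩ := hassigned i hi
    have hgd : (ν i).getD sd = s := by rw [hs]; rfl
    apply Finset.mem_biUnion.2 ⟨i, hi, ?_⟩
    rw [mem_slotsOf]
    constructor
    · show (P i).1 none ≤ (P i).1 (some ((ν i).getD sd))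
      rw [hgd, ← hs]; exact hIR i
    · show rankAt ν ((ν i).getD sd) i < q ((ν i).getD sd)
      rw [hgd]; exact rankAt_lt q hF hs
  · intro i hi j hj hij
    obtain ⟨s, hs⟩ := hassigned i hi
    obtain ⟨s', hs'⟩ := hassigned j hj
    have hgdi : (ν i).getD sd = s := by rw [hs]; rfl
    have hgdj : (ν j).getD sd = s' := by rw [hs']; rfl
    have h1 : s = s' := by
      have := congrArg Prod.fst hij
      simpa [hg, hgdi, hgdj] using this
    subst h1
    have h2 : rankAt ν s i = rankAt ν s j := by
      have := congrArg Prod.snd hij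
      simpa [hg, hgdi, hgdj] using this
    exact rankAt_inj hs hs' h2

lemma hallCond_matchableSet {X : Finset I} (h : HallCond P q X) :
    MatchableSet P q X := by
  have h2 : ∀ s : Finset {x // x ∈ X}, s.card ≤ (s.biUnion fun i => slotsOf P q i.1).card := by
    intro s
    have himg : s.biUnion (fun i => slotsOf P q i.1)
        = (s.image Subtype.val).biUnion (slotsOf P q) := by
      rw [Finset.image_biUnion]
    rw [himg]
    calc s.card = (s.image Subtype.val).card :=
          (Finset.card_image_of_injective s Subtype.val_injective).symm
      _ ≤ _ := h _ (by
          intro x hx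
          obtain ⟨y, -, rfl⟩ := Finset.mem_image.1 hx
          exact y.2)
  obtain ⟨f, hfinj, hf⟩ := (Finset.all_card_le_biUnion_card_iff_exists_injective _).1 h2
  classical
  refine ⟨fun i => if h : i ∈ X then some (f ⟨i, h⟩).1 else none, ?_, ?_, ?_⟩
  · intro s
    have : ∀ i ∈ (univ.filter fun i =>
        (if h : i ∈ X then some (f ⟨i, h⟩).1 else none) = some s),
        (if h : i ∈ X then (f ⟨i, h⟩).2 else 0) ∈ Finset.range (q s) := by
      intro i hi
      rw [Finset.mem_filter] at hi
      by_cases h : i ∈ X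
      · rw [dif_pos h] at hi ⊢
        have hs : (f ⟨i, h⟩).1 = s := by simpa using hi.2
        have h2 := ((mem_slotsOf P q).1 (hf ⟨i, h⟩)).2
        rw [hs] at h2
        exact Finset.mem_range.2 h2
      · rw [dif_neg h] at hi; simp at hi
    have hinj : Set.InjOn (fun i => if h : i ∈ X then (f ⟨i, h⟩).2 else 0)
        (univ.filter fun i =>
          (if h : i ∈ X then some (f ⟨i, h⟩).1 else none) = some s) := by
      intro i hi j hj hij
      simp only [Finset.coe_filter, Set.mem_setOf_eq] at hi hj
      have hij' : (if h : i ∈ X then (f ⟨i, h⟩).2 else 0)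
          = (if h : j ∈ X then (f ⟨j, h⟩).2 else 0) := hij
      by_cases h : i ∈ X
      · by_cases h' : j ∈ X
        · rw [dif_pos h] at hij' hi
          rw [dif_pos h'] at hij' hj
          have hi1 : (f ⟨i, h⟩).1 = s := by simpa using hi.2
          have hj1 : (f ⟨j, h'⟩).1 = s := by simpa using hj.2
          have : f ⟨i, h⟩ = f ⟨j, h'⟩ := Prod.ext (hi1.trans hj1.symm) hij'
          exact congrArg Subtype.val (hfinj this)
        · rw [dif_neg h'] at hj; simp at hj
      · rw [dif_neg h] at hi; simp at hi
    calc (univ.filter fun i =>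
          (if h : i ∈ X then some (f ⟨i, h⟩).1 else none) = some s).card
        ≤ (Finset.range (q s)).card := Finset.card_le_card_of_injOn _ this hinj
      _ = q s := Finset.card_range _
  · intro i
    show (P i).1 none ≤ (P i).1 (if h : i ∈ X then some (f ⟨i, h⟩).1 else none)
    by_cases h : i ∈ X
    · rw [dif_pos h]
      exact ((mem_slotsOf P q).1 (hf ⟨i, h⟩)).1
    · rw [dif_neg h]
  · intro i
    by_cases h : i ∈ X <;> simp [h]

lemma tight_pair {X A B : Finset I} (hX : HallCond P q X) (hA : A ⊆ X) (hB : B ⊆ X)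
    (hAt : A.card = (A.biUnion (slotsOf P q)).card)
    (hBt : B.card = (B.biUnion (slotsOf P q)).card) :
    (A ∪ B).card = ((A ∪ B).biUnion (slotsOf P q)).card := by
  have hu : (A ∪ B).biUnion (slotsOf P q)
      = A.biUnion (slotsOf P q) ∪ B.biUnion (slotsOf P q) := by
    ext x
    simp only [Finset.mem_biUnion, Finset.mem_union]
    constructor
    · rintro ⟨i, hi | hi, hx⟩
      · exact Or.inl ⟨i, hi, hx⟩
      · exact Or.inr ⟨i, hi, hx⟩
    · rintro (⟨i, hi, hx⟩ | ⟨i, hi, hx⟩)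
      · exact ⟨i, Or.inl hi, hx⟩
      · exact ⟨i, Or.inr hi, hx⟩
  have h1 : (A ∪ B).card ≤ ((A ∪ B).biUnion (slotsOf P q)).card :=
    hX _ (Finset.union_subset hA hB)
  have h2 : (A ∩ B).card ≤ ((A ∩ B).biUnion (slotsOf P q)).card :=
    hX _ ((Finset.inter_subset_left).trans hA)
  have h4 : (A ∩ B).biUnion (slotsOf P q)
      ⊆ A.biUnion (slotsOf P q) ∩ B.biUnion (slotsOf P q) := by
    intro x hx
    obtain ⟨i, hi, hx⟩ := Finset.mem_biUnion.1 hx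
    rw [Finset.mem_inter] at hi ⊢
    exact ⟨Finset.mem_biUnion.2 ⟨i, hi.1, hx⟩, Finset.mem_biUnion.2 ⟨i, hi.2, hx⟩⟩
  have h5 := Finset.card_union_add_card_inter
    (A.biUnion (slotsOf P q)) (B.biUnion (slotsOf P q))
  have h6 := Finset.card_union_add_card_inter A B
  have h7 := Finset.card_le_card h4
  rw [hu] at h1 ⊢
  omega

lemma hall_exchange {X Y : Finset I} (hX : HallCond P q X) (hY : HallCond P q Y)
    (hlt : X.card < Y.card) : ∃ i ∈ Y \ X, HallCond P q (insert i X) := by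
  by_contra hcon
  push_neg at hcon
  have key : ∀ i ∈ Y \ X, ∃ A, A ⊆ X ∧ A.card = (A.biUnion (slotsOf P q)).card ∧
      slotsOf P q i ⊆ A.biUnion (slotsOf P q) := by
    intro i hi
    have hni := hcon i hi
    rw [HallCond] at hni
    push_neg at hni
    obtain ⟨W, hWsub, hWcard⟩ := hni
    have hiW : i ∈ W := by
      by_contra hiW
      have hWX : W ⊆ X := fun x hx => by
        rcases Finset.mem_insert.1 (hWsub hx) with rfl | h
        · exact absurd hx hiW
        · exact h
      exact absurd (hX W hWX) (not_le.2 hWcard)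
    set A := W.erase i with hAdef
    have hAX : A ⊆ X := by
      intro x hx
      have hxW := Finset.mem_of_mem_erase hx
      have hxnei := Finset.ne_of_mem_erase hx
      rcases Finset.mem_insert.1 (hWsub hxW) with rfl | h
      · exact absurd rfl hxnei
      · exact h
    have hW : W = insert i A := (Finset.insert_erase hiW).symm
    have hcardW : W.card = A.card + 1 := by
      rw [hW, Finset.card_insert_of_notMem (Finset.notMem_erase i W)]
    have hNW : W.biUnion (slotsOf P q) = slotsOf P q i ∪ A.biUnion (slotsOf P q) := by
      rw [hW, Finset.biUnion_insert]
    have hA1 : A.card ≤ (A.biUnion (slotsOf P q)).card := hX A hAX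
    have hsub : A.biUnion (slotsOf P q) ⊆ W.biUnion (slotsOf P q) := by
      rw [hNW]; exact Finset.subset_union_right
    have h8 := Finset.card_le_card hsub
    have heqcard : (A.biUnion (slotsOf P q)).card = (W.biUnion (slotsOf P q)).card := by
      omega
    have heq : A.biUnion (slotsOf P q) = W.biUnion (slotsOf P q) :=
      Finset.eq_of_subset_of_card_le hsub (le_of_eq heqcard.symm)
    refine ⟨A, hAX, by omega, ?_⟩
    rw [heq, hNW]
    exact Finset.subset_union_left
  choose! A hA1 hA2 hA3 using key
  have tightU : ∀ T : Finset I, T ⊆ Y \ X →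
      (T.biUnion A) ⊆ X ∧
        (T.biUnion A).card = ((T.biUnion A).biUnion (slotsOf P q)).card := by
    intro T
    induction T using Finset.induction_on with
    | empty => intro _; simp
    | @insert a T ha ih =>
      intro hsub
      have haY : a ∈ Y \ X := hsub (Finset.mem_insert_self a T)
      have hT : T ⊆ Y \ X := fun x hx => hsub (Finset.mem_insert_of_mem hx)
      obtain ⟨ih1, ih2⟩ := ih hT
      rw [Finset.biUnion_insert]
      exact ⟨Finset.union_subset (hA1 a haY) ih1,
        tight_pair P q hX (hA1 a haY) ih1 (hA2 a haY) ih2⟩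
  set B := (Y \ X).biUnion A with hBdef
  obtain ⟨hBX, hBt⟩ := tightU (Y \ X) Finset.Subset.rfl
  have hslots : ∀ i ∈ Y \ X, slotsOf P q i ⊆ B.biUnion (slotsOf P q) := by
    intro i hi
    exact (hA3 i hi).trans (Finset.biUnion_subset_biUnion_of_subset_left _
      (Finset.subset_biUnion_of_mem A hi))
  set Z := (Y \ X) ∪ (Y ∩ B) with hZdef
  have hZY : Z ⊆ Y := Finset.union_subset Finset.sdiff_subset Finset.inter_subset_left
  have hZN : Z.biUnion (slotsOf P q) ⊆ B.biUnion (slotsOf P q) := by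
    apply Finset.biUnion_subset.2
    intro i hi
    rcases Finset.mem_union.1 hi with hi | hi
    · exact hslots i hi
    · exact Finset.subset_biUnion_of_mem _ (Finset.mem_inter.1 hi).2
  have h1 : Z.card ≤ B.card :=
    (hY Z hZY).trans ((Finset.card_le_card hZN).trans (le_of_eq hBt.symm))
  have hdis : Disjoint (Y \ X) (Y ∩ B) := by
    rw [Finset.disjoint_left]
    intro a ha ha2
    exact (Finset.mem_sdiff.1 ha).2 (hBX (Finset.mem_inter.1 ha2).2)
  have hZcard : Z.card = (Y \ X).card + (Y ∩ B).card :=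
    Finset.card_union_of_disjoint hdis
  have hBsplit : (B ∩ Y).card + (B \ Y).card = B.card :=
    Finset.card_inter_add_card_sdiff B Y
  have hYB : (Y ∩ B).card = (B ∩ Y).card := by rw [Finset.inter_comm]
  have hBY : (B \ Y).card ≤ (X \ Y).card :=
    Finset.card_le_card (Finset.sdiff_subset_sdiff hBX Finset.Subset.rfl)
  have hY1 : (Y ∩ X).card + (Y \ X).card = Y.card :=
    Finset.card_inter_add_card_sdiff Y X
  have hX1 : (X ∩ Y).card + (X \ Y).card = X.card :=
    Finset.card_inter_add_card_sdiff X Y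
  have hXY : (Y ∩ X).card = (X ∩ Y).card := by rw [Finset.inter_comm]
  omega

/-- The set of feasible IR matchings assigning everyone in `F`. -/
def GoodSet (F : Finset I) : Set (Matching I S) :=
  {ν | Feasible q ν ∧ IndivRational P ν ∧ ∀ i ∈ F, ν i ≠ none}

lemma xiStep_goodSet_pos (F : Finset I) (a : I)
    (hex : ∃ ν ∈ GoodSet P q F, ν a ≠ none) :
    xiStep (GoodSet P q F) a = GoodSet P q (insert a F) := by
  rw [xiStep, if_pos hex]
  ext ν
  simp only [GoodSet, Set.mem_setOf_eq, Finset.mem_insert]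
  constructor
  · rintro ⟨⟨h1, h2, h3⟩, h4⟩
    refine ⟨h1, h2, ?_⟩
    rintro i (rfl | hi)
    · exact h4
    · exact h3 i hi
  · rintro ⟨h1, h2, h3⟩
    exact ⟨⟨h1, h2, fun i hi => h3 i (Or.inr hi)⟩, h3 a (Or.inl rfl)⟩

lemma xiStep_goodSet_neg (F : Finset I) (a : I)
    (hex : ¬ ∃ ν ∈ GoodSet P q F, ν a ≠ none) :
    xiStep (GoodSet P q F) a = GoodSet P q F :=
  if_neg hex

lemma fold_main : ∀ (L : List I) (F : Finset I) (μ : Matching I S),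
    μ ∈ L.foldl xiStep (GoodSet P q F) →
    μ ∈ GoodSet P q F ∧
      ∀ i ∈ L, μ i = none → ∀ ν : Matching I S, Feasible q ν → IndivRational P ν →
        (∀ j, μ j ≠ none → ν j ≠ none) → ν i = none := by
  intro L
  induction L with
  | nil => intro F μ hμ; exact ⟨hμ, by simp⟩
  | cons a rest ih =>
    intro F μ hμ
    rw [List.foldl_cons] at hμ
    by_cases hex : ∃ ν ∈ GoodSet P q F, ν a ≠ none
    · rw [xiStep_goodSet_pos P q F a hex] at hμ
      obtain ⟨hg, hrest⟩ := ih (insert a F) μ hμ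
      have hga : μ a ≠ none := hg.2.2 a (Finset.mem_insert_self a F)
      refine ⟨⟨hg.1, hg.2.1, fun i hi => hg.2.2 i (Finset.mem_insert_of_mem hi)⟩, ?_⟩
      intro i hi hnone ν hF hIR hsup
      rcases List.mem_cons.1 hi with rfl | hi
      · exact absurd hnone hga
      · exact hrest i hi hnone ν hF hIR hsup
    · rw [xiStep_goodSet_neg P q F a hex] at hμ
      obtain ⟨hg, hrest⟩ := ih F μ hμ
      refine ⟨hg, ?_⟩
      intro i hi hnone ν hF hIR hsup
      rcases List.mem_cons.1 hi with rfl | hi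
      · by_contra hν
        exact hex ⟨ν, ⟨hF, hIR, fun j hj => hsup j (hg.2.2 j hj)⟩, hν⟩
      · exact hrest i hi hnone ν hF hIR hsup

end AuxEAM


/-- any matching in the final set ξ^n of the first stage of an
EAM mechanism (for an enumeration L of the students) is a maximal
individually rational matching. -/
theorem EAM_stage_one_maximal
    (P : Prof I S) (q : S → ℕ) (L : List I)
    (hnd : L.Nodup) (hcomp : ∀ i : I, i ∈ L)
    (μ : Matching I S) (hμ : μ ∈ xiList P q L) :
    Feasible q μ ∧ IndivRational P μ ∧ MaximalMatching P q μ := by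
  have h0 : {ν : Matching I S | Feasible q ν ∧ IndivRational P ν} = GoodSet P q ∅ := by
    ext ν
    simp [GoodSet]
  rw [xiList, h0] at hμ
  obtain ⟨hg, hkey⟩ := fold_main P q L ∅ μ hμ
  refine ⟨hg.1, hg.2.1, ?_⟩
  intro ν hF hIR
  by_contra hlt
  push_neg at hlt
  rw [msize, msize] at hlt
  set X := univ.filter fun i => μ i ≠ none with hXdef
  set Y := univ.filter fun i => ν i ≠ none with hYdef
  have hXm : MatchableSet P q X := ⟨μ, hg.1, hg.2.1, fun i => by simp [hXdef]⟩
  have hYm : MatchableSet P q Y := ⟨ν, hF, hIR, fun i => by simp [hYdef]⟩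
  obtain ⟨i, hiYX, hhall⟩ := hall_exchange P q (hXm.hallCond P q) (hYm.hallCond P q) hlt
  obtain ⟨ν', hF', hIR', hν'⟩ := hallCond_matchableSet P q hhall
  have hiX : i ∉ X := (Finset.mem_sdiff.1 hiYX).2
  have hμi : μ i = none := by
    by_contra hc
    exact hiX (by simp [hXdef, hc])
  have hsup : ∀ j, μ j ≠ none → ν' j ≠ none := by
    intro j hj
    exact (hν' j).2 (Finset.mem_insert_of_mem (by simp [hXdef, hj]))
  have : ν' i = none := hkey i (hcomp i) hμi ν' hF' hIR' hsup
  exact (hν' i).2 (Finset.mem_insert_self i X) this
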